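/- Under construction (H1), with S1 = V0·V1 and S2 = V0·V2 where V0 ~ Beta(1+α1,α2), V1,V2 ~ Beta(1,α1) independent, the correlation of S1 and S2 equals α2 / ((α1+1)(α1+α2)). -/

import Mathlib

open MeasureTheory ProbabilityTheory Real Filter

/-- The density of a Beta(a,b) random variable on (0,1). -/
noncomputable def betaPDFReal (a b x : ℝ) : ℝ :=
  if 0 < x ∧ x < 1 then
    (Real.Gamma (a + b) / (Real.Gamma a * Real.Gamma b)) * x ^ (a - 1) * (1 - x) ^ (b - 1)
  else 0

/-- The Beta(a,b) probability measure on ℝ. -/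
noncomputable def betaMeasure (a b : ℝ) : Measure ℝ :=
  MeasureTheory.volume.withDensity (fun x => ENNReal.ofReal (_root_.betaPDFReal a b x))

/-- `X` is a beta random variable with parameters `(a, b)` on `(Ω, μ)`. -/
def HasBetaLaw {Ω : Type*} [MeasurableSpace Ω] (μ : Measure Ω) (X : Ω → ℝ) (a b : ℝ) : Prop :=
  Measurable X ∧ μ.map X = _root_.betaMeasure a b
open scoped ENNReal NNReal

lemma real_betaIntegral {p q : ℝ} (hp : 0 < p) (hq : 0 < q) :
    ∫ x in (0:ℝ)..1, x ^ (p - 1) * (1 - x) ^ (q - 1) =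
      Real.Gamma p * Real.Gamma q / Real.Gamma (p + q) := by
  have hC := Complex.Gamma_mul_Gamma_eq_betaIntegral (s := (p:ℂ)) (t := (q:ℂ))
    (by simpa using hp) (by simpa using hq)
  have hB : Complex.betaIntegral (p:ℂ) (q:ℂ) =
      ((∫ x in (0:ℝ)..1, x ^ (p - 1) * (1 - x) ^ (q - 1) : ℝ) : ℂ) := by
    rw [Complex.betaIntegral, ← intervalIntegral.integral_ofReal]
    apply intervalIntegral.integral_congr
    intro x hx
    rw [Set.uIcc_of_le (by norm_num : (0:ℝ) ≤ 1)] at hx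
    have h1 : (0:ℝ) ≤ x := hx.1
    have h2 : (0:ℝ) ≤ 1 - x := by linarith [hx.2]
    push_cast
    rw [Complex.ofReal_cpow h1, Complex.ofReal_cpow h2]
    push_cast
    ring
  rw [hB, ← Complex.ofReal_add, Complex.Gamma_ofReal, Complex.Gamma_ofReal,
    Complex.Gamma_ofReal, ← Complex.ofReal_mul, ← Complex.ofReal_mul] at hC
  have h := Complex.ofReal_inj.mp hC
  have hΓ : (0:ℝ) < Real.Gamma (p + q) := Real.Gamma_pos_of_pos (by linarith)
  rw [eq_div_iff hΓ.ne', h, mul_comm]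

lemma measurable_betaPDFReal (a b : ℝ) : Measurable (_root_.betaPDFReal a b) := by
  unfold _root_.betaPDFReal
  have hs : MeasurableSet {x : ℝ | 0 < x ∧ x < 1} := by
    have : {x : ℝ | 0 < x ∧ x < 1} = Set.Ioo 0 1 := rfl
    rw [this]; exact measurableSet_Ioo
  exact Measurable.ite hs
    (((measurable_id.pow_const _).const_mul _).mul
      ((measurable_const.sub measurable_id).pow_const _)) measurable_const

lemma betaMeasure_moment {a b : ℝ} (ha : 0 < a) (hb : 0 < b) (n : ℕ) :
    ∫ x, x ^ n ∂(_root_.betaMeasure a b) =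
      Real.Gamma (a + b) * Real.Gamma (a + n) / (Real.Gamma a * Real.Gamma (a + n + b)) := by
  have hmeas : Measurable fun x => (_root_.betaPDFReal a b x).toNNReal :=
    (_root_.measurable_betaPDFReal a b).real_toNNReal
  have hmeq : _root_.betaMeasure a b
      = MeasureTheory.volume.withDensity (fun x => ((_root_.betaPDFReal a b x).toNNReal : ℝ≥0∞)) := rfl
  rw [hmeq, integral_withDensity_eq_integral_smul hmeas]
  have hcong : ∀ x : ℝ, (_root_.betaPDFReal a b x).toNNReal • (x ^ n)
      = Set.indicator (Set.Ioo 0 1)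
          (fun x => (Real.Gamma (a + b) / (Real.Gamma a * Real.Gamma b)) *
            (x ^ (a + n - 1) * (1 - x) ^ (b - 1))) x := by
    intro x
    rw [NNReal.smul_def, smul_eq_mul]
    by_cases hx : 0 < x ∧ x < 1
    · rw [Set.indicator_of_mem (show x ∈ Set.Ioo 0 1 from hx), _root_.betaPDFReal, if_pos hx]
      rw [Real.coe_toNNReal]
      · have hxn : (x : ℝ) ^ n = x ^ ((n : ℝ)) := (Real.rpow_natCast x n).symm
        rw [hxn, show a + (n:ℝ) - 1 = (a-1) + n by ring, Real.rpow_add hx.1]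
        ring
      · have h1 : (0:ℝ) ≤ x ^ (a-1) := Real.rpow_nonneg hx.1.le _
        have h2 : (0:ℝ) ≤ (1-x) ^ (b-1) := Real.rpow_nonneg (by linarith [hx.2]) _
        positivity
    · rw [Set.indicator_of_notMem (show x ∉ Set.Ioo 0 1 from hx), _root_.betaPDFReal, if_neg hx]
      simp
  rw [integral_congr_ae (Filter.Eventually.of_forall hcong),
    integral_indicator measurableSet_Ioo, ← integral_Ioc_eq_integral_Ioo,
    ← intervalIntegral.integral_of_le (by norm_num : (0:ℝ) ≤ 1),
    intervalIntegral.integral_const_mul]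
  have h1 : a + n - 1 = (a + n) - 1 := by ring
  rw [h1, real_betaIntegral (by positivity) hb]
  have hΓb : Real.Gamma b ≠ 0 := (Real.Gamma_pos_of_pos hb).ne'
  have hΓa : Real.Gamma a ≠ 0 := (Real.Gamma_pos_of_pos ha).ne'
  have hΓn : Real.Gamma (a + n + b) ≠ 0 := (Real.Gamma_pos_of_pos (by positivity)).ne'
  field_simp

lemma betaMeasure_moment_one {a b : ℝ} (ha : 0 < a) (hb : 0 < b) :
    ∫ x, x ∂(_root_.betaMeasure a b) = a / (a + b) := by
  have h := betaMeasure_moment ha hb 1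
  simp only [pow_one, Nat.cast_one] at h
  have hab : (0:ℝ) < a + b := by linarith
  rw [h, show a + 1 + b = (a + b) + 1 by ring, Real.Gamma_add_one ha.ne',
    Real.Gamma_add_one hab.ne']
  have hΓa : Real.Gamma a ≠ 0 := (Real.Gamma_pos_of_pos ha).ne'
  have hΓab : Real.Gamma (a + b) ≠ 0 := (Real.Gamma_pos_of_pos hab).ne'
  field_simp

lemma betaMeasure_moment_two {a b : ℝ} (ha : 0 < a) (hb : 0 < b) :
    ∫ x, x ^ 2 ∂(_root_.betaMeasure a b) = a * (a + 1) / ((a + b) * (a + b + 1)) := by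
  have h := betaMeasure_moment ha hb 2
  push_cast at h
  have hab : (0:ℝ) < a + b := by linarith
  rw [h, show a + 2 + b = ((a + b) + 1) + 1 by ring,
    Real.Gamma_add_one (by positivity : (0:ℝ) < (a+b)+1).ne', Real.Gamma_add_one hab.ne',
    show a + 2 = (a + 1) + 1 by ring,
    Real.Gamma_add_one (by positivity : (0:ℝ) < a+1).ne', Real.Gamma_add_one ha.ne']
  have hΓa : Real.Gamma a ≠ 0 := (Real.Gamma_pos_of_pos ha).ne'
  have hΓab : Real.Gamma (a + b) ≠ 0 := (Real.Gamma_pos_of_pos hab).ne'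
  have h1 : a + 1 ≠ 0 := by positivity
  have h2 : a + b + 1 ≠ 0 := by positivity
  field_simp

lemma hasBetaLaw_integral_pow {Ω : Type*} [MeasurableSpace Ω] {μ : Measure Ω} {X : Ω → ℝ}
    {a b : ℝ} (h : HasBetaLaw μ X a b) (n : ℕ) :
    ∫ ω, X ω ^ n ∂μ = ∫ x, x ^ n ∂(_root_.betaMeasure a b) := by
  rw [← h.2, integral_map h.1.aemeasurable ((measurable_id'.pow_const n).aestronglyMeasurable)]

lemma hasBetaLaw_integral {Ω : Type*} [MeasurableSpace Ω] {μ : Measure Ω} {X : Ω → ℝ}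
    {a b : ℝ} (ha : 0 < a) (hb : 0 < b) (h : HasBetaLaw μ X a b) :
    ∫ ω, X ω ∂μ = a / (a + b) := by
  have := hasBetaLaw_integral_pow h 1
  simp only [pow_one] at this
  rw [this, betaMeasure_moment_one ha hb]

lemma hasBetaLaw_integral_sq {Ω : Type*} [MeasurableSpace Ω] {μ : Measure Ω} {X : Ω → ℝ}
    {a b : ℝ} (ha : 0 < a) (hb : 0 < b) (h : HasBetaLaw μ X a b) :
    ∫ ω, X ω ^ 2 ∂μ = a * (a + 1) / ((a + b) * (a + b + 1)) := by
  rw [hasBetaLaw_integral_pow h 2, betaMeasure_moment_two ha hb]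

theorem correlation_H1 {Ω : Type*} [MeasurableSpace Ω] (μ : Measure Ω)
    [IsProbabilityMeasure μ] (V0 V1 V2 : Ω → ℝ) (α1 α2 : ℝ) (hα1 : 0 < α1) (hα2 : 0 < α2)
    (h0 : HasBetaLaw μ V0 (1 + α1) α2) (h1 : HasBetaLaw μ V1 1 α1) (h2 : HasBetaLaw μ V2 1 α1)
    (hind : iIndepFun ![V0, V1, V2] μ)
    (S1 S2 : Ω → ℝ) (hS1 : S1 = fun ω => V0 ω * V1 ω) (hS2 : S2 = fun ω => V0 ω * V2 ω) :
    ((∫ ω, S1 ω * S2 ω ∂μ) - (∫ ω, S1 ω ∂μ) * (∫ ω, S2 ω ∂μ)) /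
        (Real.sqrt ((∫ ω, S1 ω ^ 2 ∂μ) - (∫ ω, S1 ω ∂μ) ^ 2) *
          Real.sqrt ((∫ ω, S2 ω ^ 2 ∂μ) - (∫ ω, S2 ω ∂μ) ^ 2)) =
      α2 / ((α1 + 1) * (α1 + α2)) := by
  have mV0 := h0.1
  have mV1 := h1.1
  have mV2 := h2.1
  have hmf : ∀ i, Measurable (![V0, V1, V2] i) := by
    intro i; fin_cases i <;> simpa
  have ha : (0:ℝ) < 1 + α1 := by linarith
  -- individual moments
  have e0 : ∫ ω, V0 ω ∂μ = (1 + α1) / (1 + α1 + α2) := by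
    rw [hasBetaLaw_integral ha hα2 h0]
  have e0sq : ∫ ω, V0 ω ^ 2 ∂μ
      = (1 + α1) * (2 + α1) / ((1 + α1 + α2) * (2 + α1 + α2)) := by
    rw [hasBetaLaw_integral_sq ha hα2 h0]; ring_nf
  have e1 : ∫ ω, V1 ω ∂μ = 1 / (1 + α1) := by
    rw [hasBetaLaw_integral one_pos hα1 h1]
  have e2 : ∫ ω, V2 ω ∂μ = 1 / (1 + α1) := by
    rw [hasBetaLaw_integral one_pos hα1 h2]
  have e1sq : ∫ ω, V1 ω ^ 2 ∂μ = 2 / ((1 + α1) * (2 + α1)) := by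
    rw [hasBetaLaw_integral_sq one_pos hα1 h1]; ring_nf
  have e2sq : ∫ ω, V2 ω ^ 2 ∂μ = 2 / ((1 + α1) * (2 + α1)) := by
    rw [hasBetaLaw_integral_sq one_pos hα1 h2]; ring_nf
  -- independence
  have i01 : IndepFun V0 V1 μ := by
    have := hind.indepFun (show (0 : Fin 3) ≠ 1 by decide); simpa using this
  have i02 : IndepFun V0 V2 μ := by
    have := hind.indepFun (show (0 : Fin 3) ≠ 2 by decide); simpa using this
  have i12 : IndepFun V1 V2 μ := by
    have := hind.indepFun (show (1 : Fin 3) ≠ 2 by decide); simpa using this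
  have i0_12 : IndepFun V0 (fun ω => (V1 ω, V2 ω)) μ := by
    have := (hind.indepFun_prodMk hmf 1 2 0 (by decide) (by decide)).symm
    simpa using this
  -- product integrals
  have T := (1:ℝ) + α1 + α2
  have hT : (0:ℝ) < 1 + α1 + α2 := by linarith
  have hU : (0:ℝ) < 2 + α1 + α2 := by linarith
  have I1 : ∫ ω, V0 ω * V1 ω ∂μ = 1 / (1 + α1 + α2) := by
    rw [i01.integral_fun_mul_eq_mul_integral mV0.aestronglyMeasurable mV1.aestronglyMeasurable, e0, e1]
    field_simp
  have I2 : ∫ ω, V0 ω * V2 ω ∂μ = 1 / (1 + α1 + α2) := by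
    rw [i02.integral_fun_mul_eq_mul_integral mV0.aestronglyMeasurable mV2.aestronglyMeasurable, e0, e2]
    field_simp
  have ip : IndepFun (fun ω => V0 ω ^ 2) (fun ω => V1 ω * V2 ω) μ := by
    have := i0_12.comp (measurable_id'.pow_const 2) (measurable_fst.mul measurable_snd)
    exact this
  have I12 : ∫ ω, V0 ω * V1 ω * (V0 ω * V2 ω) ∂μ
      = (2 + α1) / ((1 + α1) * ((1 + α1 + α2) * (2 + α1 + α2))) := by
    have hfe : (fun ω => V0 ω * V1 ω * (V0 ω * V2 ω))
        = fun ω => (V0 ω ^ 2) * (V1 ω * V2 ω) := by funext ω; ring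
    have h12 : ∫ ω, V1 ω * V2 ω ∂μ = (1 / (1 + α1)) * (1 / (1 + α1)) := by
      rw [i12.integral_fun_mul_eq_mul_integral mV1.aestronglyMeasurable mV2.aestronglyMeasurable, e1, e2]
    rw [hfe, ip.integral_fun_mul_eq_mul_integral (mV0.pow_const 2).aestronglyMeasurable
      (mV1.mul mV2).aestronglyMeasurable, e0sq, h12]
    field_simp
  have isq1 : IndepFun (fun ω => V0 ω ^ 2) (fun ω => V1 ω ^ 2) μ :=
    i01.comp (measurable_id'.pow_const 2) (measurable_id'.pow_const 2)
  have isq2 : IndepFun (fun ω => V0 ω ^ 2) (fun ω => V2 ω ^ 2) μ :=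
    i02.comp (measurable_id'.pow_const 2) (measurable_id'.pow_const 2)
  have Isq1 : ∫ ω, (V0 ω * V1 ω) ^ 2 ∂μ = 2 / ((1 + α1 + α2) * (2 + α1 + α2)) := by
    have hfe : (fun ω => (V0 ω * V1 ω) ^ 2) = fun ω => (V0 ω ^ 2) * (V1 ω ^ 2) := by
      funext ω; ring
    rw [show (∫ ω, (V0 ω * V1 ω) ^ 2 ∂μ) = ∫ ω, (V0 ω ^ 2) * (V1 ω ^ 2) ∂μ by rw [hfe],
      isq1.integral_fun_mul_eq_mul_integral (mV0.pow_const 2).aestronglyMeasurable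
        (mV1.pow_const 2).aestronglyMeasurable, e0sq, e1sq]
    have h1 : (1 + α1) * (2 + α1) ≠ 0 := by positivity
    field_simp
  have Isq2 : ∫ ω, (V0 ω * V2 ω) ^ 2 ∂μ = 2 / ((1 + α1 + α2) * (2 + α1 + α2)) := by
    have hfe : (fun ω => (V0 ω * V2 ω) ^ 2) = fun ω => (V0 ω ^ 2) * (V2 ω ^ 2) := by
      funext ω; ring
    rw [show (∫ ω, (V0 ω * V2 ω) ^ 2 ∂μ) = ∫ ω, (V0 ω ^ 2) * (V2 ω ^ 2) ∂μ by rw [hfe],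
      isq2.integral_fun_mul_eq_mul_integral (mV0.pow_const 2).aestronglyMeasurable
        (mV2.pow_const 2).aestronglyMeasurable, e0sq, e2sq]
    have h1 : (1 + α1) * (2 + α1) ≠ 0 := by positivity
    field_simp
  subst hS1 hS2
  simp only []
  rw [I1, I2, I12, Isq1, Isq2]
  have hVar : 2 / ((1 + α1 + α2) * (2 + α1 + α2)) - (1 / (1 + α1 + α2)) ^ 2
      = (α1 + α2) / ((1 + α1 + α2) ^ 2 * (2 + α1 + α2)) := by
    field_simp
    ring
  rw [hVar, Real.mul_self_sqrt (by positivity)]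
  rw [div_eq_div_iff (by positivity : ((α1 + α2) / ((1 + α1 + α2) ^ 2 * (2 + α1 + α2)) : ℝ) ≠ 0) (by positivity : ((α1 + 1) * (α1 + α2) : ℝ) ≠ 0)]
  field_simp
  ring
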